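/- For all integers 1 ≤ p, q ≤ N, every eigenvector of J(p,q) is also an eigenvector of S(p,q): if v ∈ ℝ^q is nonzero and J(p,q) v = μ v for some μ ∈ ℝ, then there exists λ ∈ ℝ such that S(p,q) v = λ v. -/

import Mathlib

open Matrix Complex

/-- The periodic prolate matrix `S(p,q) ∈ ℝ^{q×q}` with entries
`sin(pπ(j-k)/N)/sin(π(j-k)/N)` off the diagonal and `p` on the diagonal. -/
noncomputable def prolateS (N p q : ℕ) : Matrix (Fin q) (Fin q) ℝ :=
  fun j k => if j = k then (p : ℝ)
    else Real.sin ((p : ℝ) * Real.pi * (((j : ℕ) : ℝ) - ((k : ℕ) : ℝ)) / N) /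
         Real.sin (Real.pi * (((j : ℕ) : ℝ) - ((k : ℕ) : ℝ)) / N)

/-- The symmetric tridiagonal matrix `J(p,q) ∈ ℝ^{q×q}` with diagonal entries
`cos(π(2k-q-1)/N)·cos(pπ/N)` for 1-based `k` (0-based: `cos(π(2k+1-q)/N)·cos(pπ/N)`),
off-diagonal entries `[J]_{k,k+1} = [J]_{k+1,k} = -sin(πk/N)·sin(π(q-k)/N)` for
1-based `1 ≤ k ≤ q-1`, and all other entries zero. -/
noncomputable def tridiagJ (N p q : ℕ) : Matrix (Fin q) (Fin q) ℝ :=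
  fun j k =>
    if j = k then
      Real.cos (Real.pi * (2 * ((j : ℕ) : ℝ) + 1 - (q : ℝ)) / N) *
        Real.cos ((p : ℝ) * Real.pi / N)
    else if (j : ℕ) + 1 = (k : ℕ) ∨ (k : ℕ) + 1 = (j : ℕ) then
      -(Real.sin (Real.pi * ((min (j : ℕ) (k : ℕ) : ℝ) + 1) / N) *
        Real.sin (Real.pi * ((q : ℝ) - ((min (j : ℕ) (k : ℕ) : ℝ) + 1)) / N))
    else 0

/-- Dirichlet-type cosine sum. -/
noncomputable def sD (p : ℕ) (θ d : ℝ) : ℝ :=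
  ∑ r ∈ Finset.range p, Real.cos (((p:ℝ) - 1 - 2*(r:ℝ)) * (d * θ))

lemma Tsum (p : ℕ) (x : ℝ) :
    (∑ r ∈ Finset.range p, Real.cos (((p:ℝ) - 1 - 2*(r:ℝ)) * x)) * Real.sin x
      = Real.sin ((p:ℝ) * x) := by
  rw [Finset.sum_mul]
  have h : ∀ r ∈ Finset.range p, Real.cos (((p:ℝ) - 1 - 2*(r:ℝ)) * x) * Real.sin x
      = (fun r : ℕ => Real.sin (((p:ℝ) - 2*(r:ℝ)) * x)/2) r
        - (fun r : ℕ => Real.sin (((p:ℝ) - 2*(r:ℝ)) * x)/2) (r+1) := by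
    intro r _
    have h2 := Real.sin_sub_sin (((p:ℝ) - 2*(r:ℝ)) * x) (((p:ℝ) - 2*((r:ℝ)+1)) * x)
    rw [show ((((p:ℝ) - 2*(r:ℝ)) * x - ((p:ℝ) - 2*((r:ℝ)+1)) * x)/2) = x by ring,
        show ((((p:ℝ) - 2*(r:ℝ)) * x + ((p:ℝ) - 2*((r:ℝ)+1)) * x)/2) = ((p:ℝ)-1-2*(r:ℝ))*x by ring] at h2
    push_cast
    linear_combination -h2/2
  rw [Finset.sum_congr rfl h, Finset.sum_range_sub']
  simp only [Nat.cast_zero]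
  rw [show ((p:ℝ) - 2*(p:ℝ)) * x = -((p:ℝ)*x) by ring, Real.sin_neg,
      show ((p:ℝ) - 2*0) * x = (p:ℝ)*x by ring]
  ring

lemma sD_sin (p : ℕ) (θ d : ℝ) : sD p θ d * Real.sin (d*θ) = Real.sin ((p:ℝ)*(d*θ)) :=
  Tsum p (d*θ)

lemma sD_neg (p : ℕ) (θ d : ℝ) : sD p θ (-d) = sD p θ d := by
  unfold sD
  refine Finset.sum_congr rfl fun r _ => ?_
  rw [show ((p:ℝ) - 1 - 2*(r:ℝ)) * (-d * θ) = -(((p:ℝ) - 1 - 2*(r:ℝ)) * (d * θ)) by ring,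
      Real.cos_neg]

lemma keyE (p : ℕ) (θ Q x y : ℝ) :
    -(Real.sin (x*θ) * Real.sin ((Q-x)*θ)) * sD p θ (x - 1 - y)
      + Real.cos ((2*x+1-Q)*θ) * Real.cos ((p:ℝ)*θ) * sD p θ (x - y)
      + -(Real.sin ((x+1)*θ) * Real.sin ((Q-x-1)*θ)) * sD p θ (x + 1 - y)
    = -(Real.sin (y*θ) * Real.sin ((Q-y)*θ)) * sD p θ (y - 1 - x)
      + Real.cos ((2*y+1-Q)*θ) * Real.cos ((p:ℝ)*θ) * sD p θ (y - x)
      + -(Real.sin ((y+1)*θ) * Real.sin ((Q-y-1)*θ)) * sD p θ (y + 1 - x) := by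
  have prodsin : ∀ A B : ℝ, Real.sin A * Real.sin B = (Real.cos (A-B) - Real.cos (A+B))/2 := by
    intro A B; rw [Real.cos_sub, Real.cos_add]; ring
  rw [show y - 1 - x = -(x + 1 - y) by ring, sD_neg,
      show y - x = -(x - y) by ring, sD_neg,
      show y + 1 - x = -(x - 1 - y) by ring, sD_neg]
  have e1 : Real.cos ((2*x+1-Q)*θ) - Real.cos ((2*y+1-Q)*θ)
      = -2 * Real.sin ((x+y+1-Q)*θ) * Real.sin ((x-y)*θ) := by
    rw [Real.cos_sub_cos,
        show ((2*x+1-Q)*θ + (2*y+1-Q)*θ)/2 = (x+y+1-Q)*θ by ring,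
        show ((2*x+1-Q)*θ - (2*y+1-Q)*θ)/2 = (x-y)*θ by ring]
  have e2 : Real.sin (x*θ) * Real.sin ((Q-x)*θ)
      - Real.sin ((y+1)*θ) * Real.sin ((Q-y-1)*θ)
      = -(Real.sin ((x+y+1-Q)*θ) * Real.sin ((x-1-y)*θ)) := by
    rw [prodsin, prodsin]
    have h := Real.cos_sub_cos ((2*x-Q)*θ) ((2*y+2-Q)*θ)
    rw [show ((2*x-Q)*θ + (2*y+2-Q)*θ)/2 = (x+y+1-Q)*θ by ring,
        show ((2*x-Q)*θ - (2*y+2-Q)*θ)/2 = (x-1-y)*θ by ring] at h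
    rw [show x*θ - (Q-x)*θ = (2*x-Q)*θ by ring, show x*θ + (Q-x)*θ = Q*θ by ring,
        show (y+1)*θ - (Q-y-1)*θ = (2*y+2-Q)*θ by ring,
        show (y+1)*θ + (Q-y-1)*θ = Q*θ by ring]
    linear_combination h/2
  have e3 : Real.sin ((x+1)*θ) * Real.sin ((Q-x-1)*θ)
      - Real.sin (y*θ) * Real.sin ((Q-y)*θ)
      = -(Real.sin ((x+y+1-Q)*θ) * Real.sin ((x+1-y)*θ)) := by
    rw [prodsin, prodsin]
    have h := Real.cos_sub_cos ((2*x+2-Q)*θ) ((2*y-Q)*θ)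
    rw [show ((2*x+2-Q)*θ + (2*y-Q)*θ)/2 = (x+y+1-Q)*θ by ring,
        show ((2*x+2-Q)*θ - (2*y-Q)*θ)/2 = (x+1-y)*θ by ring] at h
    rw [show (x+1)*θ - (Q-x-1)*θ = (2*x+2-Q)*θ by ring,
        show (x+1)*θ + (Q-x-1)*θ = Q*θ by ring,
        show y*θ - (Q-y)*θ = (2*y-Q)*θ by ring, show y*θ + (Q-y)*θ = Q*θ by ring]
    linear_combination h/2
  have e4 : Real.sin ((p:ℝ)*((x+1-y)*θ)) + Real.sin ((p:ℝ)*((x-1-y)*θ))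
      = 2 * Real.sin ((p:ℝ)*((x-y)*θ)) * Real.cos ((p:ℝ)*θ) := by
    rw [show (p:ℝ)*((x+1-y)*θ) = (p:ℝ)*((x-y)*θ) + (p:ℝ)*θ by ring,
        show (p:ℝ)*((x-1-y)*θ) = (p:ℝ)*((x-y)*θ) - (p:ℝ)*θ by ring,
        Real.sin_add, Real.sin_sub]
    ring
  have t0 := sD_sin p θ (x - y)
  have tm := sD_sin p θ (x - 1 - y)
  have tp := sD_sin p θ (x + 1 - y)
  linear_combination Real.cos ((p:ℝ)*θ) * sD p θ (x-y) * e1 - sD p θ (x-1-y) * e2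
    - sD p θ (x+1-y) * e3
    + Real.sin ((x+y+1-Q)*θ) * (tm + tp - 2*Real.cos ((p:ℝ)*θ) * t0 + e4)

lemma sum_ite_coe {q : ℕ} (t : ℕ) (f : Fin q → ℝ) :
    (∑ m : Fin q, if (m:ℕ) = t then f m else 0) = if h : t < q then f ⟨t,h⟩ else 0 := by
  split_ifs with h
  · rw [Finset.sum_eq_single (⟨t,h⟩ : Fin q)]
    · simp
    · intro b _ hb
      rw [if_neg]
      simpa [Fin.ext_iff] using hb
    · simp
  · apply Finset.sum_eq_zero
    intro m _
    rw [if_neg]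
    omega

lemma row_sum (N p q : ℕ) (j : Fin q) (g : ℕ → ℝ) :
    ∑ m : Fin q, tridiagJ N p q j m * g (m : ℕ)
      = (if 0 < (j:ℕ) then
          -(Real.sin (((j:ℕ):ℝ) * (Real.pi/N)) * Real.sin (((q:ℝ) - ((j:ℕ):ℝ)) * (Real.pi/N)))
            * g ((j:ℕ) - 1)
        else 0)
        + Real.cos ((2*((j:ℕ):ℝ) + 1 - (q:ℝ)) * (Real.pi/N)) * Real.cos ((p:ℝ)*(Real.pi/N)) * g (j:ℕ)
        + (if (j:ℕ)+1 < q then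
          -(Real.sin ((((j:ℕ):ℝ)+1) * (Real.pi/N)) * Real.sin (((q:ℝ) - ((j:ℕ):ℝ) - 1) * (Real.pi/N)))
            * g ((j:ℕ)+1)
        else 0) := by
  have split : ∀ m : Fin q, tridiagJ N p q j m * g (m:ℕ) =
      (if (m:ℕ)+1 = (j:ℕ) then
        -(Real.sin (((j:ℕ):ℝ) * (Real.pi/N)) * Real.sin (((q:ℝ) - ((j:ℕ):ℝ)) * (Real.pi/N))) * g (m:ℕ)
      else 0)
      + (if (m:ℕ) = (j:ℕ) then
        Real.cos ((2*((j:ℕ):ℝ) + 1 - (q:ℝ)) * (Real.pi/N)) * Real.cos ((p:ℝ)*(Real.pi/N)) * g (m:ℕ)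
      else 0)
      + (if (m:ℕ) = (j:ℕ)+1 then
        -(Real.sin ((((j:ℕ):ℝ)+1) * (Real.pi/N)) * Real.sin (((q:ℝ) - ((j:ℕ):ℝ) - 1) * (Real.pi/N))) * g (m:ℕ)
      else 0) := by
    intro m
    unfold tridiagJ
    by_cases hme : j = m
    · subst hme
      rw [if_pos rfl, if_neg (by omega), if_pos rfl, if_neg (by omega)]
      rw [show Real.pi * (2*((j:ℕ):ℝ)+1-(q:ℝ))/N = (2*((j:ℕ):ℝ)+1-(q:ℝ)) * (Real.pi/N) by ring,
          show (p:ℝ)*Real.pi/N = (p:ℝ)*(Real.pi/N) by ring]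
      ring
    · have hmn : (m:ℕ) ≠ (j:ℕ) := fun h => hme (Fin.ext h.symm)
      rw [if_neg hme]
      by_cases h1 : (m:ℕ)+1 = (j:ℕ)
      · rw [if_pos (Or.inr h1), if_pos h1, if_neg hmn, if_neg (by omega)]
        have hc : ((m:ℕ):ℝ) + 1 = ((j:ℕ):ℝ) := by exact_mod_cast congrArg (Nat.cast (R := ℝ)) h1
        have hmin : min ((j:ℕ):ℝ) ((m:ℕ):ℝ) = ((m:ℕ):ℝ) :=
          min_eq_right (by exact_mod_cast (by omega : (m:ℕ) ≤ (j:ℕ)))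
        rw [hmin, hc,
            show Real.pi * ((j:ℕ):ℝ)/N = ((j:ℕ):ℝ) * (Real.pi/N) by ring,
            show Real.pi * ((q:ℝ) - ((j:ℕ):ℝ))/N = ((q:ℝ) - ((j:ℕ):ℝ)) * (Real.pi/N) by ring]
        ring
      · by_cases h2 : (j:ℕ)+1 = (m:ℕ)
        · rw [if_pos (Or.inl h2), if_neg h1, if_neg hmn, if_pos h2.symm]
          have hmin : min ((j:ℕ):ℝ) ((m:ℕ):ℝ) = ((j:ℕ):ℝ) :=
            min_eq_left (by exact_mod_cast (by omega : (j:ℕ) ≤ (m:ℕ)))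
          rw [hmin,
              show Real.pi * (((j:ℕ):ℝ)+1)/N = (((j:ℕ):ℝ)+1) * (Real.pi/N) by ring,
              show Real.pi * ((q:ℝ) - (((j:ℕ):ℝ)+1))/N = ((q:ℝ) - ((j:ℕ):ℝ) - 1) * (Real.pi/N) by ring]
          ring
        · rw [if_neg (by omega), if_neg h1, if_neg hmn, if_neg (by omega)]
          ring
  rw [Finset.sum_congr rfl (fun m _ => split m), Finset.sum_add_distrib, Finset.sum_add_distrib]
  congr 1
  · congr 1
    · rcases Nat.eq_zero_or_pos (j:ℕ) with hj | hj
      · rw [if_neg (by omega)]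
        apply Finset.sum_eq_zero
        intro m _
        rw [if_neg (by omega)]
      · rw [if_pos hj]
        have heq : ∀ m : Fin q, ((m:ℕ)+1 = (j:ℕ)) = ((m:ℕ) = (j:ℕ)-1) := by
          intro m; apply propext; omega
        simp only [heq]
        rw [sum_ite_coe, dif_pos (show (j:ℕ)-1 < q by omega)]
    · rw [sum_ite_coe, dif_pos j.isLt]
  · rw [sum_ite_coe]
    split_ifs <;> rfl

lemma prolate_eq (N p q : ℕ) (hN : 0 < N) (hqN : q ≤ N) (j k : Fin q) :
    prolateS N p q j k = sD p (Real.pi/N) (((j:ℕ):ℝ) - ((k:ℕ):ℝ)) := by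
  unfold prolateS sD
  by_cases h : j = k
  · subst h
    simp [Real.cos_zero]
  · rw [if_neg h]
    have hjk : (j:ℕ) ≠ (k:ℕ) := fun hh => h (Fin.ext hh)
    have hNR : (N:ℝ) ≠ 0 := Nat.cast_ne_zero.mpr hN.ne'
    have hd0 : Real.sin ((((j:ℕ):ℝ) - ((k:ℕ):ℝ)) * (Real.pi/N)) ≠ 0 := by
      intro h0
      rw [Real.sin_eq_zero_iff] at h0
      obtain ⟨n, hn⟩ := h0
      have hπ : Real.pi ≠ 0 := Real.pi_ne_zero
      have h2 : (n:ℝ) * (N:ℝ) * Real.pi = (((j:ℕ):ℝ) - ((k:ℕ):ℝ)) * Real.pi := by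
        calc (n:ℝ) * (N:ℝ) * Real.pi = ((n:ℝ) * Real.pi) * (N:ℝ) := by ring
          _ = ((((j:ℕ):ℝ) - ((k:ℕ):ℝ)) * (Real.pi/N)) * (N:ℝ) := by rw [hn]
          _ = (((j:ℕ):ℝ) - ((k:ℕ):ℝ)) * Real.pi := by field_simp
      have : (n:ℝ) * (N:ℝ) = ((j:ℕ):ℝ) - ((k:ℕ):ℝ) := mul_right_cancel₀ hπ h2
      have hz : n * (N:ℤ) = ((j:ℕ):ℤ) - ((k:ℕ):ℤ) := by exact_mod_cast this
      have hj' : (j:ℕ) < q := j.isLt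
      have hk' : (k:ℕ) < q := k.isLt
      rcases lt_trichotomy n 0 with hn0 | hn0 | hn0
      · have : n * (N:ℤ) ≤ -(N:ℤ) := by nlinarith [hn0]
        omega
      · subst hn0; simp at hz; omega
      · have : (N:ℤ) ≤ n * (N:ℤ) := by nlinarith [hn0]
        omega
    rw [show Real.pi * (((j:ℕ):ℝ) - ((k:ℕ):ℝ))/N
        = (((j:ℕ):ℝ) - ((k:ℕ):ℝ)) * (Real.pi/N) by ring,
      show (p:ℝ) * Real.pi * (((j:ℕ):ℝ) - ((k:ℕ):ℝ))/N
        = (p:ℝ) * ((((j:ℕ):ℝ) - ((k:ℕ):ℝ)) * (Real.pi/N)) by ring,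
      div_eq_iff hd0]
    exact (Tsum p _).symm

lemma Jsymm (N p q : ℕ) (j k : Fin q) : tridiagJ N p q j k = tridiagJ N p q k j := by
  unfold tridiagJ
  by_cases h : j = k
  · subst h; rfl
  · rw [if_neg h, if_neg (Ne.symm h)]
    by_cases hc : (j:ℕ)+1 = (k:ℕ) ∨ (k:ℕ)+1 = (j:ℕ)
    · rw [if_pos hc, if_pos (Or.symm hc), min_comm (((j:ℕ):ℝ)) (((k:ℕ):ℝ))]
    · rw [if_neg hc, if_neg (fun hx => hc (Or.symm hx))]

lemma conv_term (N p q : ℕ) (hq : 0 < q) (j : Fin q) (z : ℝ) :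
    (if 0 < (j:ℕ) then
        -(Real.sin (((j:ℕ):ℝ)*(Real.pi/N)) * Real.sin (((q:ℝ)-((j:ℕ):ℝ))*(Real.pi/N)))
          * sD p (Real.pi/N) ((((j:ℕ)-1 : ℕ):ℝ) - z) else 0)
      + Real.cos ((2*((j:ℕ):ℝ)+1-(q:ℝ))*(Real.pi/N)) * Real.cos ((p:ℝ)*(Real.pi/N))
          * sD p (Real.pi/N) (((j:ℕ):ℝ) - z)
      + (if (j:ℕ)+1 < q then
        -(Real.sin ((((j:ℕ):ℝ)+1)*(Real.pi/N)) * Real.sin (((q:ℝ)-((j:ℕ):ℝ)-1)*(Real.pi/N)))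
          * sD p (Real.pi/N) ((((j:ℕ)+1 : ℕ):ℝ) - z) else 0)
    = -(Real.sin (((j:ℕ):ℝ)*(Real.pi/N)) * Real.sin (((q:ℝ)-((j:ℕ):ℝ))*(Real.pi/N)))
          * sD p (Real.pi/N) (((j:ℕ):ℝ) - 1 - z)
      + Real.cos ((2*((j:ℕ):ℝ)+1-(q:ℝ))*(Real.pi/N)) * Real.cos ((p:ℝ)*(Real.pi/N))
          * sD p (Real.pi/N) (((j:ℕ):ℝ) - z)
      + -(Real.sin ((((j:ℕ):ℝ)+1)*(Real.pi/N)) * Real.sin (((q:ℝ)-((j:ℕ):ℝ)-1)*(Real.pi/N)))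
          * sD p (Real.pi/N) (((j:ℕ):ℝ) + 1 - z) := by
  congr 1
  · congr 1
    split_ifs with h
    · congr 2
      push_cast [Nat.cast_sub h]
      ring
    · have hj0 : (j:ℕ) = 0 := by omega
      rw [hj0]
      simp
  · split_ifs with h
    · congr 2
      push_cast
      ring
    · have hjq : (j:ℕ)+1 = q := by omega
      have : (q:ℝ) = ((j:ℕ):ℝ) + 1 := by exact_mod_cast hjq.symm
      rw [this]
      simp

lemma commJS (N p q : ℕ) (hN : 0 < N) (hq : 0 < q) (hqN : q ≤ N) :
    tridiagJ N p q * prolateS N p q = prolateS N p q * tridiagJ N p q := by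
  ext j k
  rw [Matrix.mul_apply, Matrix.mul_apply]
  have hL : ∑ m : Fin q, tridiagJ N p q j m * prolateS N p q m k
      = ∑ m : Fin q, tridiagJ N p q j m
          * (fun t : ℕ => sD p (Real.pi/N) ((t:ℝ) - ((k:ℕ):ℝ))) (m:ℕ) :=
    Finset.sum_congr rfl fun m _ => by rw [prolate_eq N p q hN hqN m k]
  have hR : ∑ m : Fin q, prolateS N p q j m * tridiagJ N p q m k
      = ∑ m : Fin q, tridiagJ N p q k m
          * (fun t : ℕ => sD p (Real.pi/N) ((t:ℝ) - ((j:ℕ):ℝ))) (m:ℕ) := by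
    refine Finset.sum_congr rfl fun m _ => ?_
    rw [prolate_eq N p q hN hqN j m, Jsymm N p q m k,
        show ((j:ℕ):ℝ) - ((m:ℕ):ℝ) = -(((m:ℕ):ℝ) - ((j:ℕ):ℝ)) by ring, sD_neg]
    ring
  rw [hL, hR, row_sum N p q j (fun t : ℕ => sD p (Real.pi/N) ((t:ℝ) - ((k:ℕ):ℝ))),
      row_sum N p q k (fun t : ℕ => sD p (Real.pi/N) ((t:ℝ) - ((j:ℕ):ℝ)))]
  beta_reduce
  rw [conv_term N p q hq j ((k:ℕ):ℝ), conv_term N p q hq k ((j:ℕ):ℝ)]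
  exact keyE p (Real.pi/N) (q:ℝ) (((j:ℕ)):ℝ) (((k:ℕ)):ℝ)

lemma uniq (N p q : ℕ) (hN : 0 < N) (hq : 0 < q) (hqN : q ≤ N) (μ : ℝ) (w : Fin q → ℝ)
    (hw : (tridiagJ N p q).mulVec w = μ • w) (h0 : w ⟨0, hq⟩ = 0) : w = 0 := by
  have key : ∀ n, ∀ hn : n < q, w ⟨n, hn⟩ = 0 := by
    intro n
    induction n using Nat.strong_induction_on with
    | _ n ih =>
      intro hn
      match n, ih, hn with
      | 0, _, hn => exact h0
      | (t+1), ih, hn =>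
        have ht : t < q := Nat.lt_of_succ_lt hn
        have hrow := congrFun hw ⟨t, ht⟩
        simp only [Matrix.mulVec, dotProduct, Pi.smul_apply, smul_eq_mul] at hrow
        have hgw : ∀ m : Fin q, w m
            = (fun s : ℕ => if hs : s < q then w ⟨s, hs⟩ else 0) (m:ℕ) := by
          intro m
          simp only [dif_pos m.isLt, Fin.eta]
        have hrow2 : ∑ m : Fin q, tridiagJ N p q ⟨t, ht⟩ m
            * (fun s : ℕ => if hs : s < q then w ⟨s, hs⟩ else 0) (m:ℕ)
            = μ * w ⟨t, ht⟩ := by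
          rw [← hrow]
          exact Finset.sum_congr rfl fun m _ => by rw [← hgw m]
        rw [row_sum N p q ⟨t, ht⟩ (fun s : ℕ => if hs : s < q then w ⟨s, hs⟩ else 0)] at hrow2
        beta_reduce at hrow2
        have hwt : w ⟨t, ht⟩ = 0 := ih t (Nat.lt_succ_self t) ht
        have e1 : (if hs : t < q then w ⟨t, hs⟩ else 0) = 0 := by rw [dif_pos ht]; exact hwt
        have e2 : (if 0 < t then
            -(Real.sin ((t:ℝ) * (Real.pi/N)) * Real.sin (((q:ℝ) - (t:ℝ)) * (Real.pi/N)))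
              * (if hs : t-1 < q then w ⟨t-1, hs⟩ else 0) else 0) = 0 := by
          split_ifs with h hs
          · rw [ih (t-1) (by omega) hs]; ring
          · ring
          · rfl
        rw [e1, e2, if_pos hn, dif_pos hn] at hrow2
        have hb : -(Real.sin (((t:ℝ)+1) * (Real.pi/N)) * Real.sin (((q:ℝ) - (t:ℝ) - 1) * (Real.pi/N))) ≠ 0 := by
          have hNpos : (0:ℝ) < N := by exact_mod_cast hN
          have hπN : 0 < Real.pi / N := div_pos Real.pi_pos hNpos
          have s1 : 0 < Real.sin (((t:ℝ)+1) * (Real.pi/N)) := by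
            apply Real.sin_pos_of_pos_of_lt_pi
            · positivity
            · have h1 : (t:ℝ) + 1 < (N:ℝ) := by
                have : t + 1 < N := by omega
                exact_mod_cast this
              calc ((t:ℝ)+1) * (Real.pi/N) < (N:ℝ) * (Real.pi/N) := by
                    apply mul_lt_mul_of_pos_right h1 hπN
                _ = Real.pi := by field_simp
          have s2 : 0 < Real.sin (((q:ℝ) - (t:ℝ) - 1) * (Real.pi/N)) := by
            apply Real.sin_pos_of_pos_of_lt_pi
            · have : (0:ℝ) < (q:ℝ) - (t:ℝ) - 1 := by
                have : (t:ℝ) + 1 < (q:ℝ) := by exact_mod_cast hn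
                linarith
              positivity
            · have h1 : (q:ℝ) - (t:ℝ) - 1 < (N:ℝ) := by
                have hq' : (q:ℝ) ≤ (N:ℝ) := by exact_mod_cast hqN
                have ht' : (0:ℝ) ≤ (t:ℝ) := by positivity
                linarith
              calc ((q:ℝ) - (t:ℝ) - 1) * (Real.pi/N) < (N:ℝ) * (Real.pi/N) := by
                    apply mul_lt_mul_of_pos_right h1 hπN
                _ = Real.pi := by field_simp
          intro hc
          nlinarith [s1, s2]
        have : w ⟨t+1, hn⟩ = 0 := by
          have heq : -(Real.sin (((t:ℝ)+1) * (Real.pi/N)) * Real.sin (((q:ℝ) - (t:ℝ) - 1) * (Real.pi/N)))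
              * w ⟨t+1, hn⟩ = 0 := by
            rw [hwt] at hrow2
            push_cast at hrow2 ⊢
            linarith [hrow2]
          exact (mul_eq_zero.mp heq).resolve_left hb
        exact this
  funext i
  have := key i.1 i.isLt
  simpa using this

/-- Every eigenvector of `J(p,q)` is also an eigenvector of `S(p,q)`. -/
theorem eigenvector_tridiagJ_is_eigenvector_prolateS
    (N p q : ℕ) (hN : 0 < N) (hp1 : 1 ≤ p) (hpN : p ≤ N) (hq1 : 1 ≤ q) (hqN : q ≤ N)
    (v : Fin q → ℝ) (hv : v ≠ 0) (μ : ℝ)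
    (hJv : (tridiagJ N p q).mulVec v = μ • v) :
    ∃ lam : ℝ, (prolateS N p q).mulVec v = lam • v := by
  have hq : 0 < q := hq1
  have hcomm := commJS N p q hN hq hqN
  have h1 : (tridiagJ N p q).mulVec ((prolateS N p q).mulVec v)
      = μ • (prolateS N p q).mulVec v := by
    rw [Matrix.mulVec_mulVec, hcomm, ← Matrix.mulVec_mulVec, hJv, Matrix.mulVec_smul]
  have hv0 : v ⟨0, hq⟩ ≠ 0 := fun h => hv (uniq N p q hN hq hqN μ v hJv h)
  set lam := (prolateS N p q).mulVec v ⟨0, hq⟩ / v ⟨0, hq⟩ with hlam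
  refine ⟨lam, ?_⟩
  have hw : (tridiagJ N p q).mulVec ((prolateS N p q).mulVec v - lam • v)
      = μ • ((prolateS N p q).mulVec v - lam • v) := by
    rw [Matrix.mulVec_sub, Matrix.mulVec_smul, h1, hJv, smul_sub, smul_smul, smul_smul,
        mul_comm μ lam]
  have hw0 : ((prolateS N p q).mulVec v - lam • v) ⟨0, hq⟩ = 0 := by
    simp only [Pi.sub_apply, Pi.smul_apply, smul_eq_mul, hlam]
    field_simp
    ring
  have hz := uniq N p q hN hq hqN μ _ hw hw0
  have := sub_eq_zero.mp hz
  exact this
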